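/- Let D be a set, and let A : D → ℝ^{n×n} and H : D → ℝ^{n×n} be matrix families such that H(u) is symmetric positive definite for every u ∈ D (H(u) plays the role of the Hessian h''(u) of a strictly convex entropy density). If A(u) is normally elliptic for every u ∈ D and H(u)·A(u) is symmetric for every u ∈ D, then H(u)·A(u) is positive definite for every u ∈ D, i.e., the system has an entropy structure. -/

import Mathlib

open Matrix

section Aux
variable {n : ℕ}

lemma posDef_mul_mul_conjTranspose_of_isUnit {A B : Matrix (Fin n) (Fin n) ℝ}
    (hA : A.PosDef) (hB : IsUnit B) : (B * A * Bᴴ).PosDef := by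
  refine PosDef.of_dotProduct_mulVec_pos (isHermitian_mul_mul_conjTranspose _ hA.1) fun x hx => ?_
  have hxB : Bᴴ *ᵥ x ≠ 0 := by
    have hinj : Function.Injective (Bᴴ.mulVec) :=
      mulVec_injective_iff_isUnit.mpr ((isUnit_conjTranspose _).mpr hB)
    intro h
    exact hx (hinj (by simpa using h))
  have h := hA.dotProduct_mulVec_pos hxB
  rw [star_mulVec, conjTranspose_conjTranspose] at h
  rwa [Matrix.mul_assoc, ← mulVec_mulVec, dotProduct_mulVec, ← mulVec_mulVec]

lemma posDef_of_eigenvalues_pos {B : Matrix (Fin n) (Fin n) ℝ} (hB : B.IsHermitian)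
    (h : ∀ i, 0 < hB.eigenvalues i) : B.PosDef := by
  have h1 : PosDef (diagonal (RCLike.ofReal ∘ hB.eigenvalues) : Matrix (Fin n) (Fin n) ℝ) :=
    Matrix.PosDef.diagonal fun i => by simpa using h i
  have hU : IsUnit (hB.eigenvectorUnitary : Matrix (Fin n) (Fin n) ℝ) :=
    by
      have hm := hB.eigenvectorUnitary.2
      rw [Unitary.mem_iff] at hm
      exact ⟨⟨_, star (hB.eigenvectorUnitary : Matrix (Fin n) (Fin n) ℝ), hm.2, hm.1⟩, rfl⟩
  have h2 := posDef_mul_mul_conjTranspose_of_isUnit h1 hU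
  have h3 := hB.spectral_theorem
  rw [← Matrix.star_eq_conjTranspose] at h2
  rw [Unitary.conjStarAlgAut_apply] at h3
  rw [← h3] at h2
  exact h2

lemma ofReal_mem_spectrum_of_eigenvector {M : Matrix (Fin n) (Fin n) ℝ} {μ : ℝ}
    {v : Fin n → ℝ} (hv : v ≠ 0) (hMv : M *ᵥ v = μ • v) :
    (μ : ℂ) ∈ spectrum ℂ (M.map Complex.ofReal) := by
  rw [spectrum.mem_iff]
  intro hunit
  have hinj : Function.Injective ((algebraMap ℂ (Matrix (Fin n) (Fin n) ℂ) μ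
      - M.map Complex.ofReal).mulVec) := mulVec_injective_iff_isUnit.mpr hunit
  set w : Fin n → ℂ := fun i => (v i : ℂ) with hw
  have hw0 : w ≠ 0 := by
    intro h
    apply hv
    funext i
    have := congrFun h i
    simpa [hw] using this
  have hMw : (M.map Complex.ofReal) *ᵥ w = (μ : ℂ) • w := by
    funext i
    have := (RingHom.map_mulVec Complex.ofRealHom M v i).symm
    simp only [Function.comp_def] at this
    calc ((M.map Complex.ofReal) *ᵥ w) i = ((M *ᵥ v) i : ℂ) := this
      _ = ((μ : ℂ) • w) i := by rw [hMv]; simp [hw]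
  have : (algebraMap ℂ (Matrix (Fin n) (Fin n) ℂ) μ - M.map Complex.ofReal) *ᵥ w = 0 := by
    rw [sub_mulVec, hMw, Matrix.algebraMap_eq_diagonal]
    funext i
    simp [mulVec_diagonal]
  have := hinj (a₂ := 0) (by simpa using this)
  exact hw0 this


end Aux

/-- A real square matrix is *normally elliptic* if every eigenvalue
(i.e. every element of the spectrum of the associated complex matrix)
has positive real part. -/
def NormallyElliptic {n : ℕ} (A : Matrix (Fin n) (Fin n) ℝ) : Prop :=
  ∀ μ ∈ spectrum ℂ (A.map Complex.ofReal), 0 < μ.re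

/-- A (possibly nonsymmetric) real matrix is positive definite if `zᵀ M z > 0`
for all nonzero `z ∈ ℝⁿ`. -/
def PosDefMat {n : ℕ} (M : Matrix (Fin n) (Fin n) ℝ) : Prop :=
  ∀ z : Fin n → ℝ, z ≠ 0 → 0 < z ⬝ᵥ M.mulVec z

/-- If `A(u)` is normally elliptic for all `u` and `H(u)·A(u)` is symmetric
for all `u` (with `H(u)` symmetric positive definite), then `H(u)·A(u)` is
positive definite for all `u`, i.e. the system has an entropy structure. -/
theorem entropyStructure_of_normallyElliptic_of_symm {n : ℕ} {D : Type*}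
    (A H : D → Matrix (Fin n) (Fin n) ℝ)
    (hHsymm : ∀ u : D, (H u).IsSymm) (hHpd : ∀ u : D, PosDefMat (H u))
    (hA : ∀ u : D, NormallyElliptic (A u))
    (hHAsymm : ∀ u : D, (H u * A u).IsSymm) :
    ∀ u : D, PosDefMat (H u * A u) := by
  intro u z hz
  classical
  set Hm := H u with hHm
  set Am := A u with hAm
  have hHerm : Hm.IsHermitian := by
    rw [Matrix.IsHermitian, conjTranspose_eq_transpose_of_trivial]; exact hHsymm u
  have hHpd' : Hm.PosDef := PosDef.of_dotProduct_mulVec_pos hHerm fun x hx => by simpa using hHpd u x hx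
  open scoped MatrixOrder in
  set R := CFC.sqrt Hm with hRdef
  open scoped MatrixOrder in
  have hRps : R.PosSemidef := Matrix.nonneg_iff_posSemidef.mp (CFC.sqrt_nonneg Hm)
  open scoped MatrixOrder in
  have hRR : R * R = Hm := CFC.sqrt_mul_sqrt_self Hm hHpd'.posSemidef.nonneg
  have hRunit : IsUnit R := by
    rw [Matrix.isUnit_iff_isUnit_det]
    have hm : R.det * R.det = Hm.det := by rw [← det_mul, hRR]
    exact isUnit_iff_ne_zero.mpr (fun h => hHpd'.det_pos.ne' (by rw [← hm, h, mul_zero]))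
  have hRdet : IsUnit R.det := (Matrix.isUnit_iff_isUnit_det _).mp hRunit
  set S := Hm * Am with hS
  have hSHerm : S.IsHermitian := by
    rw [Matrix.IsHermitian, conjTranspose_eq_transpose_of_trivial]; exact hHAsymm u
  set B := R⁻¹ * S * R⁻¹ with hB
  have hRinvHerm : (R⁻¹).IsHermitian := hRps.1.inv
  have hSsymm : Sᵀ = S := hHAsymm u
  have hRinvSymm : R⁻¹ᵀ = R⁻¹ := by
    rw [← conjTranspose_eq_transpose_of_trivial]; exact hRinvHerm
  have hBHerm : B.IsHermitian := by
    rw [Matrix.IsHermitian, hB, conjTranspose_eq_transpose_of_trivial]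
    simp [transpose_mul, hRinvSymm, hSsymm, Matrix.mul_assoc]
  have hBA : B = R * Am * R⁻¹ := by
    rw [hB, hS, ← hRR, Matrix.mul_assoc R R Am, ← Matrix.mul_assoc R⁻¹ R (R * Am),
      Matrix.nonsing_inv_mul _ hRdet, Matrix.one_mul, Matrix.mul_assoc]
  have hBeig : ∀ i, 0 < hBHerm.eigenvalues i := by
    intro i
    have hv := hBHerm.mulVec_eigenvectorBasis i
    have hv0 : (⇑(hBHerm.eigenvectorBasis i) : Fin n → ℝ) ≠ 0 := by
      intro h
      exact hBHerm.eigenvectorBasis.orthonormal.ne_zero i (by ext j; exact congrFun h j)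
    have hmem := ofReal_mem_spectrum_of_eigenvector hv0 hv
    have hmapRRinv : R.map Complex.ofReal * R⁻¹.map Complex.ofReal = 1 := by
      have h1 : (R * R⁻¹).map (Complex.ofRealHom : ℝ →+* ℂ)
          = R.map Complex.ofRealHom * R⁻¹.map Complex.ofRealHom := Matrix.map_mul
      exact h1.symm.trans (by
        rw [Matrix.mul_nonsing_inv _ hRdet]
        exact Matrix.map_one _ (map_zero _) (map_one _))
    have hmapRinvR : R⁻¹.map Complex.ofReal * R.map Complex.ofReal = 1 := by
      have h1 : (R⁻¹ * R).map (Complex.ofRealHom : ℝ →+* ℂ)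
          = R⁻¹.map Complex.ofRealHom * R.map Complex.ofRealHom := Matrix.map_mul
      exact h1.symm.trans (by
        rw [Matrix.nonsing_inv_mul _ hRdet]
        exact Matrix.map_one _ (map_zero _) (map_one _))
    set Rc : (Matrix (Fin n) (Fin n) ℂ)ˣ :=
      ⟨R.map Complex.ofReal, R⁻¹.map Complex.ofReal, hmapRRinv, hmapRinvR⟩ with hRc
    have hconj : B.map Complex.ofReal
        = (Rc : Matrix (Fin n) (Fin n) ℂ) * (Am.map Complex.ofReal)
          * ((Rc⁻¹ : (Matrix (Fin n) (Fin n) ℂ)ˣ) : Matrix (Fin n) (Fin n) ℂ) := by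
      have h1 : (R * Am * R⁻¹).map (Complex.ofRealHom : ℝ →+* ℂ)
          = R.map Complex.ofRealHom * Am.map Complex.ofRealHom * R⁻¹.map Complex.ofRealHom := by
        rw [Matrix.map_mul, Matrix.map_mul]
      rw [hBA]
      exact h1
    have hmem2 : ((hBHerm.eigenvalues i : ℝ) : ℂ) ∈ spectrum ℂ (Am.map Complex.ofReal) := by
      rw [← spectrum.units_conjugate (u := Rc), ← hconj]
      exact hmem
    simpa using hA u _ hmem2
  have hBpd : B.PosDef := posDef_of_eigenvalues_pos hBHerm hBeig
  have hSRBR : S = R * B * R := by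
    rw [hB]
    simp only [Matrix.mul_assoc]
    rw [Matrix.nonsing_inv_mul _ hRdet, Matrix.mul_one, ← Matrix.mul_assoc,
      Matrix.mul_nonsing_inv _ hRdet, Matrix.one_mul]
  have hRsymm : Rᵀ = R := by
    rw [← conjTranspose_eq_transpose_of_trivial]; exact hRps.1
  have key : z ⬝ᵥ (R * B * R) *ᵥ z = (R *ᵥ z) ⬝ᵥ B *ᵥ (R *ᵥ z) := by
    have h2 := vecMul_transpose R z
    rw [hRsymm] at h2
    rw [Matrix.mul_assoc, ← mulVec_mulVec, dotProduct_mulVec, h2, ← mulVec_mulVec]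
  have hRz : R *ᵥ z ≠ 0 := fun h =>
    hz ((mulVec_injective_iff_isUnit.mpr hRunit) (by simpa using h))
  have hpos := hBpd.dotProduct_mulVec_pos hRz
  rw [← hSRBR] at key
  rw [show z ⬝ᵥ (Hm * Am) *ᵥ z = z ⬝ᵥ S *ᵥ z from rfl, key]
  simpa using hpos
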